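/- Let η ∈ Z_K be prime to p and not a root of unity, and let c_0(η) := max_{σ∈G} |η^σ| (maximum of the complex absolute values of the conjugates of η), so c_0(η) > 1. Let D be the multiplicative order of the image of η in (Z_K/pZ_K)^× and d its order in (Z_K/pZ_K)^× modulo the image of μ_K. Then D ≥ d ≥ log(p−1)/log(c_0(η)). -/

import Mathlib

open NumberField

noncomputable section

/-- `x` is a `p`-integer of `K`, i.e. `x` lies in the localization `Z_{K,(p)}` of the
ring of integers of `K` away from `p` (denominators prime to `p`). -/
def IsPInt (K : Type*) [Field K] [NumberField K] (p : ℕ) (x : K) : Prop :=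
  ∃ (a : 𝓞 K) (d : ℤ), ¬ (p : ℤ) ∣ d ∧ (d : K) * x = (a : K)

/-- `x ∈ I · Z_{K,(p)}`, for an ideal `I` of the ring of integers of `K`. -/
def MemPIdeal (K : Type*) [Field K] [NumberField K] (p : ℕ) (I : Ideal (𝓞 K)) (x : K) : Prop :=
  ∃ (a : 𝓞 K) (d : ℤ), ¬ (p : ℤ) ∣ d ∧ a ∈ I ∧ (d : K) * x = (a : K)

/-- `x ∈ K^×` is prime to `p` : it is a unit at every place of `K` above `p`. -/
def PrimeToP (K : Type*) [Field K] [NumberField K] (p : ℕ) (x : K) : Prop :=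
  IsPInt K p x ∧ IsPInt K p x⁻¹

/-- the prime `p` is unramified in `K`. -/
def UnramifiedIn (K : Type*) [Field K] [NumberField K] (p : ℕ) : Prop :=
  ∀ P : Ideal (𝓞 K), P.IsPrime → (p : 𝓞 K) ∈ P →
    Ideal.ramificationIdx' (Ideal.span {(p : ℤ)}) P = 1

/-- `np` is the common residue degree of the primes of `K` above `p`. -/
def ResidueDeg (K : Type*) [Field K] [NumberField K] (p np : ℕ) : Prop :=
  ∀ P : Ideal (𝓞 K), P.IsPrime → (p : 𝓞 K) ∈ P →
    Ideal.inertiaDeg' (Ideal.span {(p : ℤ)}) P = np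

/-- a rational number is a `p`-integer, i.e. lies in `ℤ_(p)`. -/
def RatIsPInt (p : ℕ) (q : ℚ) : Prop :=
  ∃ a d : ℤ, ¬ (p : ℤ) ∣ d ∧ (d : ℚ) * q = (a : ℚ)

/-- the generalized Fermat quotient `α_p(x) = (x^{p^{n_p}-1} - 1)/p`. -/
def alphaP (K : Type*) [Field K] [NumberField K] (p np : ℕ) (x : K) : K :=
  (x ^ (p ^ np - 1) - 1) / p

/-- `c₀(η) = max_{σ∈G} |η^σ|` : the maximum of the complex absolute values of the conjugates
of `η`, under a fixed embedding `ι : K → ℂ`. -/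
def houseC (K : Type*) [Field K] [NumberField K] (ι : K →+* ℂ) (x : K) : ℝ :=
  ⨆ σ : K ≃ₐ[ℚ] K, ‖ι (σ x)‖

/-- the order `D` of the image of `η` in `(Z_K/pZ_K)^×`. -/
def ordModP (K : Type*) [Field K] [NumberField K] (p : ℕ) (η : 𝓞 K) : ℕ :=
  orderOf (Ideal.Quotient.mk (Ideal.span {(p : 𝓞 K)}) η)

/-- the order `d` of the image of `η` in `(Z_K/pZ_K)^×` modulo the image of the group `μ_K`
of roots of unity of `K`: the least `k ≥ 1` with `η^k` congruent to a root of unity mod `p`. -/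
def ordModPModMu (K : Type*) [Field K] [NumberField K] (p : ℕ) (η : 𝓞 K) : ℕ :=
  sInf {k : ℕ | 0 < k ∧ ∃ ζ : 𝓞 K, (∃ j : ℕ, 0 < j ∧ ζ ^ j = 1) ∧
    η ^ k - ζ ∈ Ideal.span {(p : 𝓞 K)}}

set_option synthInstance.maxHeartbeats 1000000
set_option maxHeartbeats 1000000

private lemma aux_exists_comp (K : Type*) [Field K] [NumberField K] [IsGalois ℚ K]
    (ι φ : K →+* ℂ) : ∃ σ : K ≃ₐ[ℚ] K, ∀ x, φ x = ι (σ x) := by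
  letI : Algebra K ℂ := ι.toAlgebra
  haveI : IsScalarTower ℚ K ℂ := IsScalarTower.of_algebraMap_eq' (Subsingleton.elim _ _)
  let ϕ : K →ₐ[ℚ] ℂ := φ.toRatAlgHom
  refine ⟨ϕ.restrictNormal' K, fun x => ?_⟩
  exact (AlgHom.restrictNormal_commutes ϕ K x).symm

private lemma aux_abs_eq_one (z : ℂ) (j : ℕ) (hj : 0 < j) (h : z ^ j = 1) :
    ‖z‖ = 1 := by
  have h1 : ‖z‖ ^ j = 1 := by rw [← norm_pow, h, norm_one]
  have h0 : (0:ℝ) ≤ ‖z‖ := norm_nonneg z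
  rcases lt_trichotomy (‖z‖) 1 with hlt | he | hgt
  · exact absurd h1 (by nlinarith [pow_lt_one₀ h0 hlt hj.ne'])
  · exact he
  · exact absurd h1 (by nlinarith [one_lt_pow₀ hgt hj.ne'])

private lemma aux_prod_abs (K : Type*) [Field K] [NumberField K] [IsGalois ℚ K]
    (ι : K →+* ℂ) (x : 𝓞 K) :
    ∏ σ : K ≃ₐ[ℚ] K, ‖ι (σ (x : K))‖ = |((Algebra.norm ℤ x : ℤ) : ℝ)| := by
  have h := Algebra.norm_eq_prod_automorphisms ℚ (x : K)
  have h2 : ι (algebraMap ℚ K (Algebra.norm ℚ (x : K))) = ∏ σ : K ≃ₐ[ℚ] K, ι (σ (x : K)) := by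
    rw [h, map_prod]
  have h3 : ι (algebraMap ℚ K (Algebra.norm ℚ (x : K)))
      = ((Algebra.norm ℚ (x : K) : ℚ) : ℂ) :=
    eq_ratCast (ι.comp (algebraMap ℚ K)) _
  calc ∏ σ : K ≃ₐ[ℚ] K, ‖ι (σ (x : K))‖
      = ‖∏ σ : K ≃ₐ[ℚ] K, ι (σ (x : K))‖ := (norm_prod _ _).symm
    _ = ‖((Algebra.norm ℚ (x : K) : ℚ) : ℂ)‖ := by rw [← h2, h3]
    _ = |((Algebra.norm ℤ x : ℤ) : ℝ)| := by
        rw [← Algebra.coe_norm_int]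
        push_cast
        exact Complex.norm_intCast _

private lemma aux_one_le_prod (K : Type*) [Field K] [NumberField K] [IsGalois ℚ K]
    (ι : K →+* ℂ) (x : 𝓞 K) (hx : x ≠ 0) :
    (1 : ℝ) ≤ ∏ σ : K ≃ₐ[ℚ] K, ‖ι (σ (x : K))‖ := by
  rw [aux_prod_abs K ι x]
  have hN : Algebra.norm ℤ x ≠ 0 := by
    rw [Algebra.norm_ne_zero_iff]; exact hx
  exact_mod_cast Int.one_le_abs hN

/-- Lemma 6.3 (iii). Let `η ∈ Z_K` be prime to `p` and not a root of
unity, `c₀(η) := max_{σ∈G} |η^σ| (> 1)`, `D` the multiplicative order of `η` mod `p` and `d`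
its order mod `p` modulo roots of unity. Then `D ≥ d ≥ log(p−1)/log(c₀(η))`. -/
theorem statement15 (K : Type*) [Field K] [NumberField K] [IsGalois ℚ K]
    (ι : K →+* ℂ) (p : ℕ) (hp : p.Prime)
    (η : 𝓞 K) (hη0 : η ≠ 0) (hpr : PrimeToP K p (η : K))
    (hnr : ¬ ∃ k : ℕ, 0 < k ∧ η ^ k = 1) :
    1 < houseC K ι (η : K) ∧
    ordModPModMu K p η ≤ ordModP K p η ∧
    Real.log ((p : ℝ) - 1) / Real.log (houseC K ι (η : K)) ≤ (ordModPModMu K p η : ℝ) := by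
  classical
  set n := Module.finrank ℚ K with hn
  have hGalcard : Fintype.card (K ≃ₐ[ℚ] K) = n := by
    rw [← Nat.card_eq_fintype_card]; exact IsGalois.card_aut_eq_finrank ℚ K
  have hnpos : 0 < n := Module.finrank_pos
  set f : (K ≃ₐ[ℚ] K) → ℝ := fun σ => ‖ι (σ (η : K))‖ with hf
  have hbdd : BddAbove (Set.range f) := Set.Finite.bddAbove (Set.finite_range f)
  have hhouse : houseC K ι (η : K) = ⨆ σ, f σ := rfl
  have hle : ∀ σ, f σ ≤ houseC K ι (η : K) := fun σ => by
    rw [hhouse]; exact le_ciSup hbdd σ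
  -- Part 1 : 1 < houseC
  have hc0 : 1 < houseC K ι (η : K) := by
    by_contra hcon
    push_neg at hcon
    have hσ1 : ∀ σ : K ≃ₐ[ℚ] K, f σ ≤ 1 := fun σ => (hle σ).trans hcon
    have hprod1 : (1 : ℝ) ≤ ∏ σ : K ≃ₐ[ℚ] K, f σ := aux_one_le_prod K ι η hη0
    have hfe : ∀ σ : K ≃ₐ[ℚ] K, f σ = 1 := by
      intro σ
      refine le_antisymm (hσ1 σ) ?_
      have hrest : ∏ τ ∈ Finset.univ.erase σ, f τ ≤ 1 :=
        Finset.prod_le_one (fun τ _ => norm_nonneg _) (fun τ _ => hσ1 τ)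
      have he := Finset.prod_erase_mul Finset.univ f (Finset.mem_univ σ)
      have h2 : ∏ τ : K ≃ₐ[ℚ] K, f τ ≤ f σ := by
        rw [← he]
        exact mul_le_of_le_one_left (norm_nonneg _) hrest
      linarith
    have hall : ∀ φ : K →+* ℂ, ‖φ ((η : K))‖ = 1 := by
      intro φ
      obtain ⟨σ, hσ⟩ := aux_exists_comp K ι φ
      rw [hσ (η : K)]
      exact hfe σ
    obtain ⟨m, hm, hpow⟩ := NumberField.Embeddings.pow_eq_one_of_norm_eq_one K ℂ
      (RingOfIntegers.isIntegral_coe η) hall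
    refine hnr ⟨m, hm, ?_⟩
    apply RingOfIntegers.coe_injective
    push_cast
    simpa using hpow
  -- the quotient ring is finite
  haveI : Finite (𝓞 K ⧸ Ideal.span {(p : 𝓞 K)}) := by
    refine (finite_iff_nonempty_fintype _).2 ⟨?_⟩
    refine @Fintype.ofFinite _ (Ideal.finiteQuotientOfFreeOfNeBot _ (fun h ↦ ?_))
    rw [Ideal.span_singleton_eq_bot] at h
    exact_mod_cast hp.ne_zero ((Nat.cast_eq_zero (R := 𝓞 K)).mp h)
  -- η is a unit mod p
  obtain ⟨a, dd, hdd, hda⟩ := hpr.2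
  have hηK : (η : K) ≠ 0 := RingOfIntegers.coe_ne_zero_iff.2 hη0
  have hdd_eq : (dd : 𝓞 K) = a * η := by
    apply RingOfIntegers.coe_injective
    have h := congrArg (· * (η : K)) hda
    simp only [mul_assoc, inv_mul_cancel₀ hηK, mul_one] at h
    push_cast
    exact h
  have hcop : IsCoprime ((p : ℤ)) dd :=
    (Nat.prime_iff_prime_int.1 hp).coprime_iff_not_dvd.2 hdd
  obtain ⟨u, v, huv⟩ := hcop
  have hdd_unit : IsUnit (Ideal.Quotient.mk (Ideal.span {(p : 𝓞 K)}) (dd : 𝓞 K)) := by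
    refine IsUnit.of_mul_eq_one (Ideal.Quotient.mk _ (v : 𝓞 K)) ?_
    rw [← map_mul, ← map_one (Ideal.Quotient.mk (Ideal.span {(p : 𝓞 K)})), Ideal.Quotient.eq,
      Ideal.mem_span_singleton']
    refine ⟨-(u : 𝓞 K), ?_⟩
    have h1 : ((u : 𝓞 K)) * (p : 𝓞 K) + (v : 𝓞 K) * (dd : 𝓞 K) = 1 := by
      exact_mod_cast congrArg (fun z : ℤ => (z : 𝓞 K)) huv
    linear_combination -h1
  have hη_unit : IsUnit (Ideal.Quotient.mk (Ideal.span {(p : 𝓞 K)}) η) := by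
    have hmul : IsUnit (Ideal.Quotient.mk (Ideal.span {(p : 𝓞 K)}) a *
        Ideal.Quotient.mk (Ideal.span {(p : 𝓞 K)}) η) := by
      rw [← map_mul, ← hdd_eq]; exact hdd_unit
    exact isUnit_of_mul_isUnit_right hmul
  -- D := ordModP is positive
  have hD : 0 < ordModP K p η := by
    have hoo : orderOf (Ideal.Quotient.mk (Ideal.span {(p : 𝓞 K)}) η)
        = orderOf hη_unit.unit := by
      rw [← orderOf_units, hη_unit.unit_spec]
    show 0 < orderOf (Ideal.Quotient.mk (Ideal.span {(p : 𝓞 K)}) η)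
    rw [hoo]
    exact orderOf_pos _
  -- the defining set of d
  set S : Set ℕ := {k : ℕ | 0 < k ∧ ∃ ζ : 𝓞 K, (∃ j : ℕ, 0 < j ∧ ζ ^ j = 1) ∧
    η ^ k - ζ ∈ Ideal.span {(p : 𝓞 K)}} with hS
  have hDS : ordModP K p η ∈ S := by
    refine ⟨hD, 1, ⟨1, one_pos, one_pow 1⟩, ?_⟩
    have hpw : Ideal.Quotient.mk (Ideal.span {(p : 𝓞 K)}) (η ^ ordModP K p η)
        = Ideal.Quotient.mk (Ideal.span {(p : 𝓞 K)}) 1 := by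
      rw [map_pow, map_one]
      exact pow_orderOf_eq_one _
    exact Ideal.Quotient.eq.1 hpw
  have hdD : ordModPModMu K p η ≤ ordModP K p η := Nat.sInf_le hDS
  have hdS : ordModPModMu K p η ∈ S := Nat.sInf_mem ⟨_, hDS⟩
  obtain ⟨hd0, ζ, ⟨j, hj0, hζj⟩, hmemI⟩ := hdS
  set d := ordModPModMu K p η with hd
  -- absolute values of the conjugates of ζ are 1
  have hζabs : ∀ σ : K ≃ₐ[ℚ] K, ‖ι (σ (ζ : K))‖ = 1 := by
    intro σ
    refine aux_abs_eq_one _ j hj0 ?_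
    have hζK : ((ζ : K)) ^ j = 1 := by exact_mod_cast congrArg (algebraMap (𝓞 K) K) hζj
    have hσζ : (σ ((ζ : K))) ^ j = 1 := by rw [← map_pow, hζK, map_one]
    rw [← map_pow, hσζ, map_one]
  -- α = η^d - ζ
  set α : 𝓞 K := η ^ d - ζ with hα
  have hα0 : α ≠ 0 := by
    intro h
    have hEq : η ^ d = ζ := by rwa [hα, sub_eq_zero] at h
    exact hnr ⟨d * j, Nat.mul_pos hd0 hj0, by rw [pow_mul, hEq, hζj]⟩
  obtain ⟨β, hβ⟩ := Ideal.mem_span_singleton'.1 hmemI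
  have hβ0 : β ≠ 0 := by
    rintro rfl
    rw [zero_mul] at hβ
    exact hα0 hβ.symm
  -- lower bound for the product of the conjugates of α
  have hNp : Algebra.norm ℤ ((p : 𝓞 K)) = (p : ℤ) ^ n := by
    have hpalg : (p : 𝓞 K) = algebraMap ℤ (𝓞 K) (p : ℤ) := by push_cast; rfl
    rw [hpalg, Algebra.norm_algebraMap_of_basis (RingOfIntegers.basis K)]
    congr 1
    rw [← Module.finrank_eq_card_chooseBasisIndex, RingOfIntegers.rank]
  have hNα : Algebra.norm ℤ α = Algebra.norm ℤ β * (p : ℤ) ^ n := by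
    rw [← hβ, map_mul, hNp]
  have hkey : ((p : ℝ)) ^ n ≤ ∏ σ : K ≃ₐ[ℚ] K, ‖ι (σ (α : K))‖ := by
    rw [aux_prod_abs K ι α, hNα]
    have h1 : (1 : ℤ) ≤ |Algebra.norm ℤ β| :=
      Int.one_le_abs (Algebra.norm_ne_zero_iff.2 hβ0)
    have h2 : |Algebra.norm ℤ β * (p : ℤ) ^ n| = |Algebra.norm ℤ β| * (p : ℤ) ^ n := by
      rw [abs_mul, abs_pow, abs_of_nonneg (by positivity : (0:ℤ) ≤ (p:ℤ))]
    have h3 : ((p : ℤ) : ℝ) ^ n ≤ ((|Algebra.norm ℤ β| * (p : ℤ) ^ n : ℤ) : ℝ) := by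
      push_cast
      nlinarith [pow_pos (by exact_mod_cast hp.pos : (0:ℝ) < (p:ℝ)) n,
        (by exact_mod_cast h1 : (1:ℝ) ≤ |(Algebra.norm ℤ β : ℝ)|)]
    calc ((p : ℝ)) ^ n = ((p : ℤ) : ℝ) ^ n := by push_cast; ring
      _ ≤ ((|Algebra.norm ℤ β| * (p : ℤ) ^ n : ℤ) : ℝ) := h3
      _ = |((Algebra.norm ℤ β * (p : ℤ) ^ n : ℤ) : ℝ)| := by
          rw [← h2, Int.cast_abs]
  -- upper bound for each conjugate of α
  set c₀ := houseC K ι (η : K) with hc₀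
  have hbound : ∀ σ : K ≃ₐ[ℚ] K, ‖ι (σ (α : K))‖ ≤ c₀ ^ d + 1 := by
    intro σ
    have hαK : (α : K) = ((η : K)) ^ d - (ζ : K) := by rw [hα]; push_cast; ring
    have e1 : ι (σ (α : K)) = (ι (σ (η : K))) ^ d - ι (σ (ζ : K)) := by
      rw [hαK, map_sub, map_sub, map_pow, map_pow]
    rw [e1]
    have htri : ‖(ι (σ (η : K))) ^ d - ι (σ (ζ : K))‖
        ≤ ‖(ι (σ (η : K))) ^ d‖ + ‖ι (σ (ζ : K))‖ := by
      have h := norm_sub_le ((ι (σ (η : K))) ^ d) (ι (σ (ζ : K)))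
      exact h
    have hpowle : (‖ι (σ (η : K))‖) ^ d ≤ c₀ ^ d :=
      pow_le_pow_left₀ (norm_nonneg _) (hle σ) d
    have habsζ := hζabs σ
    rw [norm_pow] at htri
    linarith
  have hprodle : ∏ σ : K ≃ₐ[ℚ] K, ‖ι (σ (α : K))‖ ≤ (c₀ ^ d + 1) ^ n := by
    calc ∏ σ : K ≃ₐ[ℚ] K, ‖ι (σ (α : K))‖
        ≤ ∏ _σ : K ≃ₐ[ℚ] K, (c₀ ^ d + 1) :=
          Finset.prod_le_prod (fun σ _ => norm_nonneg _) (fun σ _ => hbound σ)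
      _ = (c₀ ^ d + 1) ^ n := by rw [Finset.prod_const, Finset.card_univ, hGalcard]
  have hpn : ((p : ℝ)) ^ n ≤ (c₀ ^ d + 1) ^ n := hkey.trans hprodle
  have hple : (p : ℝ) ≤ c₀ ^ d + 1 := by
    have h01 : (0:ℝ) ≤ (p : ℝ) := by positivity
    have h02 : (0:ℝ) ≤ c₀ ^ d + 1 := by positivity
    exact (pow_le_pow_iff_left₀ h01 h02 hnpos.ne').1 hpn
  have hp2 : (2 : ℝ) ≤ (p : ℝ) := by exact_mod_cast hp.two_le
  have hlogle : Real.log ((p : ℝ) - 1) ≤ (d : ℝ) * Real.log c₀ := by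
    have h1 : (0:ℝ) < (p : ℝ) - 1 := by linarith
    have h2 : (p : ℝ) - 1 ≤ c₀ ^ d := by linarith
    calc Real.log ((p : ℝ) - 1) ≤ Real.log (c₀ ^ d) := Real.log_le_log h1 h2
      _ = (d : ℝ) * Real.log c₀ := by rw [Real.log_pow]
  refine ⟨hc0, hdD, ?_⟩
  rw [div_le_iff₀ (Real.log_pos hc0)]
  exact hlogle
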